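/- Let w⁰ satisfy w⁰_{j+m/2} = w⁰_j for j = 1, …, m/2, let σ be L-Lipschitz, assume ‖x_i‖₂ ≤ 1 and |y_i| ≤ C_y for all i, m ≥ 4, ζ > 0, and let w* satisfy ‖w* − w⁰‖_F ≤ ε. If f* := f(w*; v*) satisfies ⟨f*, y⟩ ≥ 0 and ‖f*‖₂ ≤ ‖f(w*; ζ·𝟙)‖₂ (properties the paper derives at a KKT point of the constrained problem), then ‖f* − y‖₂² ≤ n ((m/2) L ζ ε)² + n C_y². -/
import Mathlib


noncomputable section

/-- Euclidean (ℓ²) norm of a finite-dimensional real vector. -/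
def eNorm {ι : Type*} [Fintype ι] (r : ι → ℝ) : ℝ :=
  Real.sqrt (∑ i, r i ^ 2)

/-- Frobenius norm of a hidden-weight configuration, neurons indexed by `Fin h ⊕ Fin h`
(first half / mirrored half, so the width is `m = 2h`). -/
def wFrob {d h : ℕ} (u : (Fin h ⊕ Fin h) → Fin d → ℝ) : ℝ :=
  Real.sqrt (∑ j, ∑ k, u j k ^ 2)

/-- Pairwise one-hidden-layer network
`f(x; w, v) = ∑_{j=1}^{m/2} vⱼ (σ(wⱼᵀ x) − σ(w_{j+m/2}ᵀ x))` with `m = 2h`. -/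
def pairNet (σ : ℝ → ℝ) {d h : ℕ} (x : Fin d → ℝ)
    (w : (Fin h ⊕ Fin h) → Fin d → ℝ) (v : Fin h → ℝ) : ℝ :=
  ∑ j : Fin h, v j * (σ (∑ k, w (Sum.inl j) k * x k) - σ (∑ k, w (Sum.inr j) k * x k))

/-- Vector of network outputs `f(w; v) = (f(x₁; w, v), …, f(xₙ; w, v)) ∈ ℝⁿ`. -/
def pairVec (σ : ℝ → ℝ) {d n h : ℕ} (x : Fin n → Fin d → ℝ)
    (w : (Fin h ⊕ Fin h) → Fin d → ℝ) (v : Fin h → ℝ) : Fin n → ℝ :=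
  fun i => pairNet σ (x i) w v

/-- Empirical loss `ℓ(w, v) = (1/2) ‖y − f(w; v)‖₂²`. -/
def pairLoss (σ : ℝ → ℝ) {d n h : ℕ} (x : Fin n → Fin d → ℝ) (y : Fin n → ℝ)
    (w : (Fin h ⊕ Fin h) → Fin d → ℝ) (v : Fin h → ℝ) : ℝ :=
  (1 / 2) * ∑ i, (y i - pairNet σ (x i) w v) ^ 2

/-- Gradient of the empirical loss with respect to the hidden weights, as a
hidden-weight-shaped array of partial derivatives. -/
def gradLossW (σ : ℝ → ℝ) {d n h : ℕ} (x : Fin n → Fin d → ℝ) (y : Fin n → ℝ)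
    (w : (Fin h ⊕ Fin h) → Fin d → ℝ) (v : Fin h → ℝ) :
    (Fin h ⊕ Fin h) → Fin d → ℝ :=
  fun j k => fderiv ℝ (fun w' => pairLoss σ x y w' v) w (Pi.single j (Pi.single k 1))

/-- Feasible set `B_{ζ,κ}` for the outer weights: every entry is at least `ζ` and the ratio
of any two entries is at most `κ`. -/
def inB {h : ℕ} (ζ κ : ℝ) (v : Fin h → ℝ) : Prop :=
  (∀ j, ζ ≤ v j) ∧ ∀ j j', v j / v j' ≤ κ

/-- `J̃(w)ᵀ r`, where `J̃(w) ∈ ℝ^{n × md}` is the `v`-stripped Jacobian whose `(i, j)` block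
is `σ'(wⱼᵀ xᵢ) xᵢᵀ`. -/
def strippedJacT (σ : ℝ → ℝ) {d n h : ℕ} (x : Fin n → Fin d → ℝ)
    (w : (Fin h ⊕ Fin h) → Fin d → ℝ) (r : Fin n → ℝ) :
    (Fin h ⊕ Fin h) → Fin d → ℝ :=
  fun j k => ∑ i, deriv σ (∑ s, w j s * x i s) * x i k * r i

/-- Smallest singular value of the `v`-stripped Jacobian `J̃(w) ∈ ℝ^{n × md}`:
the infimum of `‖J̃(w)ᵀ r‖₂` over unit vectors `r ∈ ℝⁿ`. -/
def sMin (σ : ℝ → ℝ) {d n h : ℕ} (x : Fin n → Fin d → ℝ)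
    (w : (Fin h ⊕ Fin h) → Fin d → ℝ) : ℝ :=
  sInf ((fun r : Fin n → ℝ => wFrob (strippedJacT σ x w r)) '' {r | eNorm r = 1})

/-- with mirrored `w⁰`, `L`-Lipschitz `σ`, `‖xᵢ‖₂ ≤ 1`, `|yᵢ| ≤ C_y`,
width `m = 2h ≥ 4`, `ζ > 0` and `‖w* − w⁰‖_F ≤ ε`: if `f* := f(w*; v*)` satisfies
`⟨f*, y⟩ ≥ 0` and `‖f*‖₂ ≤ ‖f(w*; ζ·𝟙)‖₂`, then
`‖f* − y‖₂² ≤ n ((m/2) L ζ ε)² + n C_y²`. -/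
theorem statement_10
    (d n h : ℕ) (hh : 2 ≤ h)
    (σ : ℝ → ℝ) (L : NNReal) (hσ_lip : LipschitzWith L σ)
    (x : Fin n → Fin d → ℝ) (y : Fin n → ℝ) (C_y : ℝ)
    (hx : ∀ i, eNorm (x i) ≤ 1) (hy : ∀ i, |y i| ≤ C_y)
    (w0 : (Fin h ⊕ Fin h) → Fin d → ℝ)
    (hmirror : ∀ j, w0 (Sum.inr j) = w0 (Sum.inl j))
    (ζ ε : ℝ) (hζ : 0 < ζ)
    (wstar : (Fin h ⊕ Fin h) → Fin d → ℝ) (vstar : Fin h → ℝ)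
    (hw : wFrob (wstar - w0) ≤ ε)
    (hip : 0 ≤ ∑ i, pairNet σ (x i) wstar vstar * y i)
    (hle : eNorm (fun i => pairNet σ (x i) wstar vstar) ≤
      eNorm (fun i => pairNet σ (x i) wstar (fun _ => ζ))) :
    eNorm (fun i => pairNet σ (x i) wstar vstar - y i) ^ 2 ≤
      (n : ℝ) * ((h : ℝ) * (L : ℝ) * ζ * ε) ^ 2 + (n : ℝ) * C_y ^ 2 := by
  have hε0 : (0:ℝ) ≤ ε := le_trans (Real.sqrt_nonneg _) hw
  set a : Fin h → ℝ := fun j =>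
    Real.sqrt (∑ k, (wstar (Sum.inl j) k - wstar (Sum.inr j) k) ^ 2) with ha
  have ha0 : ∀ j, 0 ≤ a j := fun j => Real.sqrt_nonneg _
  have hasq : ∀ j, (a j) ^ 2 = ∑ k, (wstar (Sum.inl j) k - wstar (Sum.inr j) k) ^ 2 := by
    intro j
    exact Real.sq_sqrt (Finset.sum_nonneg fun k _ => sq_nonneg _)
  -- total square bound
  have hT : ∑ j, (a j) ^ 2 ≤ 2 * ε ^ 2 := by
    have hw2 : (∑ j, ∑ k, ((wstar - w0) j k) ^ 2) ≤ ε ^ 2 := by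
      have h1 := Real.sq_sqrt (show (0:ℝ) ≤ ∑ j, ∑ k, ((wstar - w0) j k) ^ 2 from
        Finset.sum_nonneg fun j _ => Finset.sum_nonneg fun k _ => sq_nonneg _)
      have h2 : wFrob (wstar - w0) ^ 2 ≤ ε ^ 2 :=
        pow_le_pow_left₀ (Real.sqrt_nonneg _) hw 2
      rw [wFrob] at h2
      rw [h1] at h2
      exact h2
    have hsplit : (∑ j : Fin h ⊕ Fin h, ∑ k, ((wstar - w0) j k) ^ 2)
        = (∑ j : Fin h, ∑ k, ((wstar - w0) (Sum.inl j) k) ^ 2)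
          + ∑ j : Fin h, ∑ k, ((wstar - w0) (Sum.inr j) k) ^ 2 :=
      Fintype.sum_sum_type _
    calc ∑ j, (a j) ^ 2
        = ∑ j : Fin h, ∑ k, (wstar (Sum.inl j) k - wstar (Sum.inr j) k) ^ 2 := by
          simp [hasq]
      _ ≤ ∑ j : Fin h, ∑ k,
            (2 * ((wstar - w0) (Sum.inl j) k) ^ 2 + 2 * ((wstar - w0) (Sum.inr j) k) ^ 2) := by
          apply Finset.sum_le_sum; intro j _
          apply Finset.sum_le_sum; intro k _
          have hm := hmirror j
          have : wstar (Sum.inl j) k - wstar (Sum.inr j) k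
              = (wstar - w0) (Sum.inl j) k - (wstar - w0) (Sum.inr j) k := by
            simp only [Pi.sub_apply, hm]; ring
          rw [this]
          nlinarith [sq_nonneg ((wstar - w0) (Sum.inl j) k + (wstar - w0) (Sum.inr j) k)]
      _ = 2 * ((∑ j : Fin h, ∑ k, ((wstar - w0) (Sum.inl j) k) ^ 2)
            + ∑ j : Fin h, ∑ k, ((wstar - w0) (Sum.inr j) k) ^ 2) := by
          simp only [Finset.sum_add_distrib, Finset.mul_sum, mul_add]
      _ ≤ 2 * ε ^ 2 := by rw [← hsplit]; nlinarith [hw2]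
  -- sum bound
  have hsum : ∑ j, a j ≤ (h : ℝ) * ε := by
    have hcs : (∑ j, a j) ^ 2 ≤ (h : ℝ) * ∑ j, (a j) ^ 2 := by
      have := sq_sum_le_card_mul_sum_sq (s := Finset.univ) (f := a)
      simpa using this
    have hh2 : (2 : ℝ) * (h : ℝ) ≤ (h : ℝ) ^ 2 := by
      have : (2 : ℝ) ≤ (h : ℝ) := by exact_mod_cast hh
      nlinarith
    have hsq : (∑ j, a j) ^ 2 ≤ ((h : ℝ) * ε) ^ 2 := by nlinarith [hT]
    have h0 : 0 ≤ ∑ j, a j := Finset.sum_nonneg fun j _ => ha0 j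
    nlinarith [hsq, h0, mul_nonneg (Nat.cast_nonneg h : (0:ℝ) ≤ h) hε0]
  -- pointwise bound on the ζ-network
  have hSi : ∀ i, |pairNet σ (x i) wstar (fun _ => ζ)| ≤ ζ * (L : ℝ) * ((h : ℝ) * ε) := by
    intro i
    have hxle : ∀ j : Fin h,
        |σ (∑ k, wstar (Sum.inl j) k * x i k) - σ (∑ k, wstar (Sum.inr j) k * x i k)|
          ≤ (L : ℝ) * a j := by
      intro j
      have hlip := hσ_lip.dist_le_mul (∑ k, wstar (Sum.inl j) k * x i k)
        (∑ k, wstar (Sum.inr j) k * x i k)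
      rw [Real.dist_eq, Real.dist_eq] at hlip
      have hdiff : (∑ k, wstar (Sum.inl j) k * x i k) - ∑ k, wstar (Sum.inr j) k * x i k
          = ∑ k, (wstar (Sum.inl j) k - wstar (Sum.inr j) k) * x i k := by
        rw [← Finset.sum_sub_distrib]; apply Finset.sum_congr rfl; intro k _; ring
      rw [hdiff] at hlip
      refine le_trans hlip (mul_le_mul_of_nonneg_left ?_ (NNReal.coe_nonneg L))
      -- |∑ d k * x k| ≤ a j
      have hcs := Finset.sum_mul_sq_le_sq_mul_sq Finset.univ
        (fun k => wstar (Sum.inl j) k - wstar (Sum.inr j) k) (x i)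
      have hxn : Real.sqrt (∑ k, (x i k) ^ 2) ≤ 1 := hx i
      have hxs : (∑ k, (x i k) ^ 2) ≤ 1 := by
        have h0 : (0:ℝ) ≤ ∑ k, (x i k) ^ 2 := Finset.sum_nonneg fun k _ => sq_nonneg _
        nlinarith [Real.sq_sqrt h0, Real.sqrt_nonneg (∑ k, (x i k) ^ 2), hxn]
      have habs : |∑ k, (wstar (Sum.inl j) k - wstar (Sum.inr j) k) * x i k| ^ 2
          ≤ (a j) ^ 2 := by
        rw [sq_abs, hasq j]
        calc (∑ k, (wstar (Sum.inl j) k - wstar (Sum.inr j) k) * x i k) ^ 2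
            ≤ (∑ k, (wstar (Sum.inl j) k - wstar (Sum.inr j) k) ^ 2) * ∑ k, (x i k) ^ 2 := hcs
          _ ≤ ∑ k, (wstar (Sum.inl j) k - wstar (Sum.inr j) k) ^ 2 := by
              have h1 : (0:ℝ) ≤ ∑ k, (wstar (Sum.inl j) k - wstar (Sum.inr j) k) ^ 2 :=
                Finset.sum_nonneg fun k _ => sq_nonneg _
              nlinarith
      nlinarith [habs, abs_nonneg (∑ k, (wstar (Sum.inl j) k - wstar (Sum.inr j) k) * x i k), ha0 j, sq_nonneg (|∑ k, (wstar (Sum.inl j) k - wstar (Sum.inr j) k) * x i k| + a j)]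
    calc |pairNet σ (x i) wstar (fun _ => ζ)|
        ≤ ∑ j, |ζ * (σ (∑ k, wstar (Sum.inl j) k * x i k)
            - σ (∑ k, wstar (Sum.inr j) k * x i k))| := by
          rw [pairNet]; exact Finset.abs_sum_le_sum_abs _ _
      _ ≤ ∑ j, ζ * ((L : ℝ) * a j) := by
          apply Finset.sum_le_sum; intro j _
          rw [abs_mul, abs_of_pos hζ]
          exact mul_le_mul_of_nonneg_left (hxle j) hζ.le
      _ = ζ * (L : ℝ) * ∑ j, a j := by simp only [← mul_assoc, ← Finset.mul_sum]
      _ ≤ ζ * (L : ℝ) * ((h : ℝ) * ε) := by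
          apply mul_le_mul_of_nonneg_left hsum
          exact mul_nonneg hζ.le (NNReal.coe_nonneg L)
  -- assemble
  have hf2 : (∑ i, (pairNet σ (x i) wstar vstar) ^ 2)
      ≤ (n : ℝ) * ((h : ℝ) * (L : ℝ) * ζ * ε) ^ 2 := by
    have h1 : (∑ i, (pairNet σ (x i) wstar vstar) ^ 2)
        ≤ ∑ i, (pairNet σ (x i) wstar (fun _ => ζ)) ^ 2 := by
      have := pow_le_pow_left₀ (Real.sqrt_nonneg _) hle 2
      simp only [eNorm] at this
      rw [Real.sq_sqrt (Finset.sum_nonneg fun i _ => sq_nonneg _),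
        Real.sq_sqrt (Finset.sum_nonneg fun i _ => sq_nonneg _)] at this
      exact this
    refine le_trans h1 ?_
    calc (∑ i, (pairNet σ (x i) wstar (fun _ => ζ)) ^ 2)
        ≤ ∑ _i : Fin n, (ζ * (L : ℝ) * ((h : ℝ) * ε)) ^ 2 := by
          apply Finset.sum_le_sum; intro i _
          calc (pairNet σ (x i) wstar (fun _ => ζ)) ^ 2
              = |pairNet σ (x i) wstar (fun _ => ζ)| ^ 2 := (sq_abs _).symm
            _ ≤ (ζ * (L : ℝ) * ((h : ℝ) * ε)) ^ 2 :=
                pow_le_pow_left₀ (abs_nonneg _) (hSi i) 2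
      _ = (n : ℝ) * ((h : ℝ) * (L : ℝ) * ζ * ε) ^ 2 := by
          rw [Finset.sum_const, Finset.card_univ, Fintype.card_fin, nsmul_eq_mul]; ring
  have hy2 : (∑ i, (y i) ^ 2) ≤ (n : ℝ) * C_y ^ 2 := by
    calc (∑ i, (y i) ^ 2) ≤ ∑ _i : Fin n, C_y ^ 2 := by
          apply Finset.sum_le_sum; intro i _
          calc (y i) ^ 2 = |y i| ^ 2 := (sq_abs _).symm
            _ ≤ C_y ^ 2 := pow_le_pow_left₀ (abs_nonneg _) (hy i) 2
      _ = (n : ℝ) * C_y ^ 2 := by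
          rw [Finset.sum_const, Finset.card_univ, Fintype.card_fin, nsmul_eq_mul]
  show Real.sqrt (∑ i, (pairNet σ (x i) wstar vstar - y i) ^ 2) ^ 2 ≤ _
  rw [Real.sq_sqrt (Finset.sum_nonneg fun i _ => sq_nonneg _)]
  have hexp : (∑ i, (pairNet σ (x i) wstar vstar - y i) ^ 2)
      = (∑ i, (pairNet σ (x i) wstar vstar) ^ 2)
        - 2 * (∑ i, pairNet σ (x i) wstar vstar * y i) + ∑ i, (y i) ^ 2 := by
    rw [Finset.mul_sum, ← Finset.sum_sub_distrib, ← Finset.sum_add_distrib]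
    apply Finset.sum_congr rfl; intro i _; ring
  rw [hexp]
  linarith [hf2, hy2, hip]
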